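/- Let q₁, q₂ be distributions over [n], let α* ∈ [0,1], let p = (1−α*)q₁ + α*q₂, and let s > 0. On some probability space, let (X_i)_{i∈[n]}, (Y_i)_{i∈[n]}, (Z_i)_{i∈[n]} be mutually independent random variables with X_i ∼ Poisson(s·p(i)), Y_i ∼ Poisson(s·q₁(i)), Z_i ∼ Poisson(s·q₂(i)), and define B := 2 ∑_{i=1}^n (Y_i + X_i Y_i + Y_i Z_i − Y_i² − X_i Z_i). Then E[B] = −2 α* s² ‖q₁ − q₂‖₂², and for any b ≥ max(‖q₁‖₂², ‖q₂‖₂²), Var(B) ≤ 32 s³ ‖q₁ − q₂‖₄² √b + 28 s² b. -/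

import Mathlib

open Finset MeasureTheory ProbabilityTheory
open scoped NNReal ENNReal

namespace Stmt10Aux

noncomputable def pm : ℕ → ℝ → ℝ
  | 0, _ => 1
  | 1, l => l
  | 2, l => l + l ^ 2
  | 3, l => l + 3 * l ^ 2 + l ^ 3
  | 4, l => l + 7 * l ^ 2 + 6 * l ^ 3 + l ^ 4
  | _, _ => 0

lemma hasSum_descFactorial (r : ℝ≥0) (j : ℕ) :
    HasSum (fun k : ℕ => (k.descFactorial j : ℝ) * poissonPMFReal r k) ((r : ℝ) ^ j) := by
  have hinj : Function.Injective (fun k : ℕ => k + j) := add_left_injective j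
  have h0 : ∀ k ∉ Set.range (fun k : ℕ => k + j),
      (k.descFactorial j : ℝ) * poissonPMFReal r k = 0 := by
    intro k hk
    have hk' : k < j := by
      by_contra h
      exact hk ⟨k - j, by simp; omega⟩
    rw [Nat.descFactorial_eq_zero_iff_lt.2 hk']
    simp
  rw [← hinj.hasSum_iff h0]
  have heq : ((fun k : ℕ => (k.descFactorial j : ℝ) * poissonPMFReal r k) ∘ fun k => k + j)
      = fun k : ℕ => (r : ℝ) ^ j * poissonPMFReal r k := by
    funext k
    have hfac : (k.factorial : ℝ) * ((k + j).descFactorial j : ℝ) = ((k + j).factorial : ℝ) := by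
      rw [← Nat.cast_mul]
      norm_cast
      have := Nat.factorial_mul_descFactorial (n := k + j) (k := j) (by omega)
      simpa [Nat.add_sub_cancel] using this
    have hfk : (k.factorial : ℝ) ≠ 0 := by positivity
    have hfkj : ((k + j).factorial : ℝ) ≠ 0 := by positivity
    have hd : ((k + j).descFactorial j : ℝ) ≠ 0 := by
      rw [Nat.cast_ne_zero]
      simp [Nat.descFactorial_eq_zero_iff_lt]
    simp only [Function.comp, poissonPMFReal]
    rw [← hfac, pow_add]
    field_simp
  rw [heq]
  simpa [poissonPMFReal] using (poissonPMFRealSum r).mul_left ((r : ℝ) ^ j)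

lemma nat_pow2 (k : ℕ) : k ^ 2 = k.descFactorial 2 + k.descFactorial 1 := by
  rcases k with _ | k
  · decide
  · simp [Nat.descFactorial]
    ring

lemma nat_pow3 (k : ℕ) : k ^ 3 = k.descFactorial 3 + 3 * k.descFactorial 2 + k.descFactorial 1 := by
  rcases k with _ | _ | k
  · decide
  · decide
  · simp [Nat.descFactorial]
    ring_nf
    try omega

lemma nat_pow4 (k : ℕ) : k ^ 4 = k.descFactorial 4 + 6 * k.descFactorial 3
    + 7 * k.descFactorial 2 + k.descFactorial 1 := by
  rcases k with _ | _ | _ | k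
  · decide
  · decide
  · decide
  · simp [Nat.descFactorial]
    ring_nf
    try omega

lemma hasSum_pow (r : ℝ≥0) (m : ℕ) (hm : m ≤ 4) :
    HasSum (fun k : ℕ => (k : ℝ) ^ m * poissonPMFReal r k) (pm m (r : ℝ)) := by
  interval_cases m
  · simpa [pm, poissonPMFReal] using poissonPMFRealSum r
  · simpa [pm] using hasSum_descFactorial r 1
  · have h := (hasSum_descFactorial r 2).add (hasSum_descFactorial r 1)
    have heq : (fun k : ℕ => (k.descFactorial 2 : ℝ) * poissonPMFReal r k
        + (k.descFactorial 1 : ℝ) * poissonPMFReal r k)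
        = fun k : ℕ => (k : ℝ) ^ 2 * poissonPMFReal r k := by
      funext k
      have := nat_pow2 k
      have h2 : ((k : ℝ)) ^ 2 = (k.descFactorial 2 : ℝ) + (k.descFactorial 1 : ℝ) := by
        exact_mod_cast congrArg (fun x : ℕ => (x : ℝ)) this
      rw [h2]; ring
    rw [heq] at h
    convert h using 1
    simp [pm]; try ring
  · have h := ((hasSum_descFactorial r 3).add ((hasSum_descFactorial r 2).mul_left 3)).add
      (hasSum_descFactorial r 1)
    have heq : (fun k : ℕ => ((k.descFactorial 3 : ℝ) * poissonPMFReal r k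
        + 3 * ((k.descFactorial 2 : ℝ) * poissonPMFReal r k))
        + (k.descFactorial 1 : ℝ) * poissonPMFReal r k)
        = fun k : ℕ => (k : ℝ) ^ 3 * poissonPMFReal r k := by
      funext k
      have := nat_pow3 k
      have h2 : ((k : ℝ)) ^ 3 = (k.descFactorial 3 : ℝ) + 3 * (k.descFactorial 2 : ℝ)
          + (k.descFactorial 1 : ℝ) := by exact_mod_cast congrArg (fun x : ℕ => (x : ℝ)) this
      rw [h2]; ring
    rw [heq] at h
    convert h using 1
    simp [pm]; try ring
  · have h := (((hasSum_descFactorial r 4).add ((hasSum_descFactorial r 3).mul_left 6)).add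
      ((hasSum_descFactorial r 2).mul_left 7)).add (hasSum_descFactorial r 1)
    have heq : (fun k : ℕ => (((k.descFactorial 4 : ℝ) * poissonPMFReal r k
        + 6 * ((k.descFactorial 3 : ℝ) * poissonPMFReal r k))
        + 7 * ((k.descFactorial 2 : ℝ) * poissonPMFReal r k))
        + (k.descFactorial 1 : ℝ) * poissonPMFReal r k)
        = fun k : ℕ => (k : ℝ) ^ 4 * poissonPMFReal r k := by
      funext k
      have := nat_pow4 k
      have h2 : ((k : ℝ)) ^ 4 = (k.descFactorial 4 : ℝ) + 6 * (k.descFactorial 3 : ℝ)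
          + 7 * (k.descFactorial 2 : ℝ) + (k.descFactorial 1 : ℝ) := by
        exact_mod_cast congrArg (fun x : ℕ => (x : ℝ)) this
      rw [h2]; ring
    rw [heq] at h
    convert h using 1
    simp [pm]; try ring


lemma poisson_apply_singleton (r : ℝ≥0) (k : ℕ) :
    poissonMeasure r {k} = ENNReal.ofReal (poissonPMFReal r k) := by
  rw [poissonMeasure_singleton]
  rfl

lemma poisson_integrable_pow (r : ℝ≥0) (m : ℕ) (hm : m ≤ 4) :
    Integrable (fun k : ℕ => (k : ℝ) ^ m) (poissonMeasure r) := by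
  have h := hasSum_pow r m hm
  refine ⟨measurable_from_top.aestronglyMeasurable, ?_⟩
  rw [HasFiniteIntegral, lintegral_countable']
  have heq : ∀ k : ℕ, (‖(k : ℝ) ^ m‖₊ : ℝ≥0∞) * poissonMeasure r {k}
      = ENNReal.ofReal ((k : ℝ) ^ m * poissonPMFReal r k) := by
    intro k
    rw [poisson_apply_singleton, ← enorm_eq_nnnorm, Real.enorm_eq_ofReal (by positivity : (0:ℝ) ≤ (k : ℝ) ^ m),
      ← ENNReal.ofReal_mul (by positivity)]
  calc ∑' k : ℕ, (‖(k : ℝ) ^ m‖₊ : ℝ≥0∞) * poissonMeasure r {k}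
      = ∑' k : ℕ, ENNReal.ofReal ((k : ℝ) ^ m * poissonPMFReal r k) := by
        exact tsum_congr heq
    _ = ENNReal.ofReal (pm m (r : ℝ)) := by
        rw [← ENNReal.ofReal_tsum_of_nonneg (fun k => mul_nonneg (by positivity) poissonPMFReal_nonneg) h.summable, h.tsum_eq]
    _ < ⊤ := ENNReal.ofReal_lt_top

lemma poisson_integral_pow (r : ℝ≥0) (m : ℕ) (hm : m ≤ 4) :
    ∫ k : ℕ, (k : ℝ) ^ m ∂(poissonMeasure r) = pm m (r : ℝ) := by
  rw [integral_poissonMeasure' (poisson_integrable_pow r m hm)]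
  have heq : ∀ k : ℕ, (Real.exp (-(r : ℝ)) * (r : ℝ) ^ k / (k.factorial : ℝ)) • ((k : ℝ) ^ m)
      = (k : ℝ) ^ m * poissonPMFReal r k := by
    intro k
    rw [smul_eq_mul, mul_comm]
    rfl
  rw [tsum_congr heq, (hasSum_pow r m hm).tsum_eq]

end Stmt10Aux


/-- A distribution over `[n]`: nonnegative values summing to 1. -/
def IsDist {n : ℕ} (p : Fin n → ℝ) : Prop :=
  (∀ i, 0 ≤ p i) ∧ ∑ i, p i = 1

set_option maxHeartbeats 3000000 in
/-- With `p = (1−α*)q₁ + α*q₂`, mutually independent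
`X_i ∼ Poi(s·p(i))`, `Y_i ∼ Poi(s·q₁(i))`, `Z_i ∼ Poi(s·q₂(i))` and
`B = 2∑ᵢ (Yᵢ + XᵢYᵢ + YᵢZᵢ − Yᵢ² − XᵢZᵢ)`, one has
`E[B] = −2α*s²‖q₁ − q₂‖₂²` and, for `b ≥ max(‖q₁‖₂², ‖q₂‖₂²)`,
`Var(B) ≤ 32s³‖q₁ − q₂‖₄²√b + 28s²b`. -/
theorem stmt10 {n : ℕ} (p q₁ q₂ : Fin n → ℝ)
    (hq₁ : IsDist q₁) (hq₂ : IsDist q₂)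
    (αs : ℝ) (hαs0 : 0 ≤ αs) (hαs1 : αs ≤ 1)
    (hp : ∀ i, p i = (1 - αs) * q₁ i + αs * q₂ i)
    (s : ℝ) (hs : 0 < s)
    {Ω : Type*} [MeasurableSpace Ω] (μ : Measure Ω) [IsProbabilityMeasure μ]
    (X Y Z : Fin n → Ω → ℕ)
    (W : Fin 3 × Fin n → Ω → ℕ)
    (hWmeas : ∀ k, Measurable (W k))
    (hW : ∀ i, W (0, i) = X i ∧ W (1, i) = Y i ∧ W (2, i) = Z i)
    (hindep : iIndepFun W μ)
    (hX : ∀ i, μ.map (X i) = poissonMeasure (s * p i).toNNReal)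
    (hY : ∀ i, μ.map (Y i) = poissonMeasure (s * q₁ i).toNNReal)
    (hZ : ∀ i, μ.map (Z i) = poissonMeasure (s * q₂ i).toNNReal)
    (B : Ω → ℝ)
    (hB : ∀ ω, B ω = 2 * ∑ i, ((Y i ω : ℝ) + (X i ω : ℝ) * (Y i ω : ℝ)
        + (Y i ω : ℝ) * (Z i ω : ℝ) - (Y i ω : ℝ) ^ 2 - (X i ω : ℝ) * (Z i ω : ℝ))) :
    (μ[B] = -2 * αs * s ^ 2 * ∑ i, (q₁ i - q₂ i) ^ 2) ∧
    ∀ b : ℝ, max (∑ i, q₁ i ^ 2) (∑ i, q₂ i ^ 2) ≤ b →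
      variance B μ ≤ 32 * s ^ 3 * Real.sqrt (∑ i, (q₁ i - q₂ i) ^ 4) * Real.sqrt b
        + 28 * s ^ 2 * b := by
  classical
  obtain ⟨hq₁0, hq₁s⟩ := hq₁
  obtain ⟨hq₂0, hq₂s⟩ := hq₂
  have hp0 : ∀ i, 0 ≤ p i := fun i => by
    rw [hp i]
    have h1 := hq₁0 i; have h2 := hq₂0 i
    nlinarith
  have hXm : ∀ i, Measurable (X i) := fun i => (hW i).1 ▸ hWmeas ((0 : Fin 3), i)
  have hYm : ∀ i, Measurable (Y i) := fun i => (hW i).2.1 ▸ hWmeas ((1 : Fin 3), i)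
  have hZm : ∀ i, Measurable (Z i) := fun i => (hW i).2.2 ▸ hWmeas ((2 : Fin 3), i)
  have momGen : ∀ (f : Ω → ℕ), Measurable f → ∀ (r : ℝ≥0), μ.map f = poissonMeasure r →
      ∀ m : ℕ, m ≤ 4 → Integrable (fun ω => (f ω : ℝ) ^ m) μ ∧
        ∫ ω, (f ω : ℝ) ^ m ∂μ = Stmt10Aux.pm m (r : ℝ) := by
    intro f hf r hmap m hm
    have hg : AEStronglyMeasurable (fun k : ℕ => (k : ℝ) ^ m) (μ.map f) :=
      measurable_from_top.aestronglyMeasurable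
    constructor
    · exact (integrable_map_measure hg hf.aemeasurable).1
        (by rw [hmap]; exact Stmt10Aux.poisson_integrable_pow r m hm)
    · calc ∫ ω, (f ω : ℝ) ^ m ∂μ = ∫ k : ℕ, (k : ℝ) ^ m ∂(μ.map f) :=
            (integral_map hf.aemeasurable hg).symm
        _ = Stmt10Aux.pm m (r : ℝ) := by
            rw [hmap]; exact Stmt10Aux.poisson_integral_pow r m hm
  have momX : ∀ (i : Fin n) (m : ℕ), m ≤ 4 → Integrable (fun ω => (X i ω : ℝ) ^ m) μ ∧
      ∫ ω, (X i ω : ℝ) ^ m ∂μ = Stmt10Aux.pm m (s * p i) := by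
    intro i m hm
    have h := momGen (X i) (hXm i) _ (hX i) m hm
    rwa [Real.coe_toNNReal _ (mul_nonneg hs.le (hp0 i))] at h
  have momY : ∀ (i : Fin n) (m : ℕ), m ≤ 4 → Integrable (fun ω => (Y i ω : ℝ) ^ m) μ ∧
      ∫ ω, (Y i ω : ℝ) ^ m ∂μ = Stmt10Aux.pm m (s * q₁ i) := by
    intro i m hm
    have h := momGen (Y i) (hYm i) _ (hY i) m hm
    rwa [Real.coe_toNNReal _ (mul_nonneg hs.le (hq₁0 i))] at h
  have momZ : ∀ (i : Fin n) (m : ℕ), m ≤ 4 → Integrable (fun ω => (Z i ω : ℝ) ^ m) μ ∧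
      ∫ ω, (Z i ω : ℝ) ^ m ∂μ = Stmt10Aux.pm m (s * q₂ i) := by
    intro i m hm
    have h := momGen (Z i) (hZm i) _ (hZ i) m hm
    rwa [Real.coe_toNNReal _ (mul_nonneg hs.le (hq₂0 i))] at h
  have hne : ∀ (a b : Fin 3) (i : Fin n), a ≠ b → ((a, i) : Fin 3 × Fin n) ≠ (b, i) := by
    intro a b i hab
    simp [Prod.ext_iff, hab]
  have indYZ : ∀ (i : Fin n) (b c : ℕ),
      IndepFun (fun ω => (Y i ω : ℝ) ^ b) (fun ω => (Z i ω : ℝ) ^ c) μ := by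
    intro i b c
    have h0 : IndepFun (W ((1 : Fin 3), i)) (W ((2 : Fin 3), i)) μ :=
      hindep.indepFun (hne _ _ i (by decide))
    rw [(hW i).2.1, (hW i).2.2] at h0
    exact h0.comp (measurable_from_top (f := fun k : ℕ => (k : ℝ) ^ b))
      (measurable_from_top (f := fun k : ℕ => (k : ℝ) ^ c))
  have indXYZ : ∀ (i : Fin n) (a b c : ℕ),
      IndepFun (fun ω => (X i ω : ℝ) ^ a)
        (fun ω => (Y i ω : ℝ) ^ b * (Z i ω : ℝ) ^ c) μ := by
    intro i a b c
    have h0 := hindep.indepFun_prodMk hWmeas ((1 : Fin 3), i) ((2 : Fin 3), i)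
      ((0 : Fin 3), i) (hne _ _ i (by decide)) (hne _ _ i (by decide))
    rw [(hW i).1, (hW i).2.1, (hW i).2.2] at h0
    have hφ : Measurable (fun q : ℕ × ℕ => (q.1 : ℝ) ^ b * (q.2 : ℝ) ^ c) :=
      ((measurable_from_top (f := fun k : ℕ => (k : ℝ) ^ b)).comp measurable_fst).mul
        ((measurable_from_top (f := fun k : ℕ => (k : ℝ) ^ c)).comp measurable_snd)
    exact (h0.comp hφ (measurable_from_top (f := fun k : ℕ => (k : ℝ) ^ a))).symm
  have key : ∀ (i : Fin n) (a b c : ℕ), a ≤ 4 → b ≤ 4 → c ≤ 4 →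
      Integrable (fun ω => (X i ω : ℝ) ^ a * ((Y i ω : ℝ) ^ b * (Z i ω : ℝ) ^ c)) μ ∧
      ∫ ω, (X i ω : ℝ) ^ a * ((Y i ω : ℝ) ^ b * (Z i ω : ℝ) ^ c) ∂μ
        = Stmt10Aux.pm a (s * p i) * (Stmt10Aux.pm b (s * q₁ i) * Stmt10Aux.pm c (s * q₂ i)) := by
    intro i a b c ha hb hc
    obtain ⟨iX, vX⟩ := momX i a ha
    obtain ⟨iY, vY⟩ := momY i b hb
    obtain ⟨iZ, vZ⟩ := momZ i c hc
    have hYZ : Integrable (fun ω => (Y i ω : ℝ) ^ b * (Z i ω : ℝ) ^ c) μ :=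
      (indYZ i b c).integrable_mul iY iZ
    refine ⟨(indXYZ i a b c).integrable_mul iX hYZ, ?_⟩
    calc ∫ ω, (X i ω : ℝ) ^ a * ((Y i ω : ℝ) ^ b * (Z i ω : ℝ) ^ c) ∂μ
        = (∫ ω, (X i ω : ℝ) ^ a ∂μ) * ∫ ω, (Y i ω : ℝ) ^ b * (Z i ω : ℝ) ^ c ∂μ :=
          (indXYZ i a b c).integral_fun_mul_eq_mul_integral iX.aestronglyMeasurable hYZ.aestronglyMeasurable
      _ = (∫ ω, (X i ω : ℝ) ^ a ∂μ) * ((∫ ω, (Y i ω : ℝ) ^ b ∂μ) * ∫ ω, (Z i ω : ℝ) ^ c ∂μ) := by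
          congr 1
          exact (indYZ i b c).integral_fun_mul_eq_mul_integral iY.aestronglyMeasurable iZ.aestronglyMeasurable
      _ = _ := by rw [vX, vY, vZ]
  set T : Fin n → Ω → ℝ := fun i ω => (Y i ω : ℝ) + (X i ω : ℝ) * (Y i ω : ℝ)
      + (Y i ω : ℝ) * (Z i ω : ℝ) - (Y i ω : ℝ) ^ 2 - (X i ω : ℝ) * (Z i ω : ℝ) with hTdef
  have hTint : ∀ i : Fin n, Integrable (T i) μ := by
    intro i
    have j1 : Integrable (fun ω => (X i ω : ℝ) ^ 0 * ((Y i ω : ℝ) ^ 1 * (Z i ω : ℝ) ^ 0)) μ := (key i 0 1 0 (by norm_num) (by norm_num) (by norm_num)).1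
    have j2 : Integrable (fun ω => (X i ω : ℝ) ^ 1 * ((Y i ω : ℝ) ^ 1 * (Z i ω : ℝ) ^ 0)) μ := (key i 1 1 0 (by norm_num) (by norm_num) (by norm_num)).1
    have j3 : Integrable (fun ω => (X i ω : ℝ) ^ 0 * ((Y i ω : ℝ) ^ 1 * (Z i ω : ℝ) ^ 1)) μ := (key i 0 1 1 (by norm_num) (by norm_num) (by norm_num)).1
    have j4 : Integrable (fun ω => (X i ω : ℝ) ^ 0 * ((Y i ω : ℝ) ^ 2 * (Z i ω : ℝ) ^ 0)) μ := (key i 0 2 0 (by norm_num) (by norm_num) (by norm_num)).1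
    have j5 : Integrable (fun ω => (X i ω : ℝ) ^ 1 * ((Y i ω : ℝ) ^ 0 * (Z i ω : ℝ) ^ 1)) μ := (key i 1 0 1 (by norm_num) (by norm_num) (by norm_num)).1
    have : Integrable (fun ω => (X i ω : ℝ) ^ 0 * ((Y i ω : ℝ) ^ 1 * (Z i ω : ℝ) ^ 0) + (X i ω : ℝ) ^ 1 * ((Y i ω : ℝ) ^ 1 * (Z i ω : ℝ) ^ 0) + (X i ω : ℝ) ^ 0 * ((Y i ω : ℝ) ^ 1 * (Z i ω : ℝ) ^ 1) - (X i ω : ℝ) ^ 0 * ((Y i ω : ℝ) ^ 2 * (Z i ω : ℝ) ^ 0) - (X i ω : ℝ) ^ 1 * ((Y i ω : ℝ) ^ 0 * (Z i ω : ℝ) ^ 1)) μ :=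
      (((j1.add j2).add j3).sub j4).sub j5
    have heq : T i = fun ω => (X i ω : ℝ) ^ 0 * ((Y i ω : ℝ) ^ 1 * (Z i ω : ℝ) ^ 0) + (X i ω : ℝ) ^ 1 * ((Y i ω : ℝ) ^ 1 * (Z i ω : ℝ) ^ 0) + (X i ω : ℝ) ^ 0 * ((Y i ω : ℝ) ^ 1 * (Z i ω : ℝ) ^ 1) - (X i ω : ℝ) ^ 0 * ((Y i ω : ℝ) ^ 2 * (Z i ω : ℝ) ^ 0) - (X i ω : ℝ) ^ 1 * ((Y i ω : ℝ) ^ 0 * (Z i ω : ℝ) ^ 1) := by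
      funext ω; simp only [hTdef]; ring
    rw [heq]
    exact this
  have hTval : ∀ i : Fin n, ∫ ω, T i ω ∂μ = -(αs * s ^ 2 * (q₁ i - q₂ i) ^ 2) := by
    intro i
    have j1 : Integrable (fun ω => (X i ω : ℝ) ^ 0 * ((Y i ω : ℝ) ^ 1 * (Z i ω : ℝ) ^ 0)) μ := (key i 0 1 0 (by norm_num) (by norm_num) (by norm_num)).1
    have j2 : Integrable (fun ω => (X i ω : ℝ) ^ 1 * ((Y i ω : ℝ) ^ 1 * (Z i ω : ℝ) ^ 0)) μ := (key i 1 1 0 (by norm_num) (by norm_num) (by norm_num)).1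
    have j3 : Integrable (fun ω => (X i ω : ℝ) ^ 0 * ((Y i ω : ℝ) ^ 1 * (Z i ω : ℝ) ^ 1)) μ := (key i 0 1 1 (by norm_num) (by norm_num) (by norm_num)).1
    have j4 : Integrable (fun ω => (X i ω : ℝ) ^ 0 * ((Y i ω : ℝ) ^ 2 * (Z i ω : ℝ) ^ 0)) μ := (key i 0 2 0 (by norm_num) (by norm_num) (by norm_num)).1
    have j5 : Integrable (fun ω => (X i ω : ℝ) ^ 1 * ((Y i ω : ℝ) ^ 0 * (Z i ω : ℝ) ^ 1)) μ := (key i 1 0 1 (by norm_num) (by norm_num) (by norm_num)).1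
    have s1 : Integrable (fun ω => (X i ω : ℝ) ^ 0 * ((Y i ω : ℝ) ^ 1 * (Z i ω : ℝ) ^ 0)) μ := j1
    have s2 : Integrable (fun ω => (X i ω : ℝ) ^ 0 * ((Y i ω : ℝ) ^ 1 * (Z i ω : ℝ) ^ 0) + (X i ω : ℝ) ^ 1 * ((Y i ω : ℝ) ^ 1 * (Z i ω : ℝ) ^ 0)) μ := s1.add j2
    have s3 : Integrable (fun ω => (X i ω : ℝ) ^ 0 * ((Y i ω : ℝ) ^ 1 * (Z i ω : ℝ) ^ 0) + (X i ω : ℝ) ^ 1 * ((Y i ω : ℝ) ^ 1 * (Z i ω : ℝ) ^ 0) + (X i ω : ℝ) ^ 0 * ((Y i ω : ℝ) ^ 1 * (Z i ω : ℝ) ^ 1)) μ := s2.add j3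
    have s4 : Integrable (fun ω => (X i ω : ℝ) ^ 0 * ((Y i ω : ℝ) ^ 1 * (Z i ω : ℝ) ^ 0) + (X i ω : ℝ) ^ 1 * ((Y i ω : ℝ) ^ 1 * (Z i ω : ℝ) ^ 0) + (X i ω : ℝ) ^ 0 * ((Y i ω : ℝ) ^ 1 * (Z i ω : ℝ) ^ 1) - (X i ω : ℝ) ^ 0 * ((Y i ω : ℝ) ^ 2 * (Z i ω : ℝ) ^ 0)) μ := s3.sub j4
    have sfull : Integrable (fun ω => (X i ω : ℝ) ^ 0 * ((Y i ω : ℝ) ^ 1 * (Z i ω : ℝ) ^ 0) + (X i ω : ℝ) ^ 1 * ((Y i ω : ℝ) ^ 1 * (Z i ω : ℝ) ^ 0) + (X i ω : ℝ) ^ 0 * ((Y i ω : ℝ) ^ 1 * (Z i ω : ℝ) ^ 1) - (X i ω : ℝ) ^ 0 * ((Y i ω : ℝ) ^ 2 * (Z i ω : ℝ) ^ 0) - (X i ω : ℝ) ^ 1 * ((Y i ω : ℝ) ^ 0 * (Z i ω : ℝ) ^ 1)) μ := s4.sub j5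
    have hexp : (fun ω => T i ω) = fun ω => (X i ω : ℝ) ^ 0 * ((Y i ω : ℝ) ^ 1 * (Z i ω : ℝ) ^ 0) + (X i ω : ℝ) ^ 1 * ((Y i ω : ℝ) ^ 1 * (Z i ω : ℝ) ^ 0) + (X i ω : ℝ) ^ 0 * ((Y i ω : ℝ) ^ 1 * (Z i ω : ℝ) ^ 1) - (X i ω : ℝ) ^ 0 * ((Y i ω : ℝ) ^ 2 * (Z i ω : ℝ) ^ 0) - (X i ω : ℝ) ^ 1 * ((Y i ω : ℝ) ^ 0 * (Z i ω : ℝ) ^ 1) := by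
      funext ω; simp only [hTdef]; ring
    rw [hexp]
    rw [integral_sub s4 j5,
      integral_sub s3 j4,
      integral_add s2 j3,
      integral_add s1 j2]
    try simp only [MeasureTheory.integral_const_mul]
    rw [(key i 0 1 0 (by norm_num) (by norm_num) (by norm_num)).2,
      (key i 1 1 0 (by norm_num) (by norm_num) (by norm_num)).2,
      (key i 0 1 1 (by norm_num) (by norm_num) (by norm_num)).2,
      (key i 0 2 0 (by norm_num) (by norm_num) (by norm_num)).2,
      (key i 1 0 1 (by norm_num) (by norm_num) (by norm_num)).2]
    simp only [Stmt10Aux.pm]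
    rw [hp i]
    ring
  have hT2val : ∀ i : Fin n, ∫ ω, (T i ω) ^ 2 ∂μ
      = s ^ 2 * (q₁ i * q₂ i + 2 * q₁ i ^ 2 + p i * q₁ i + p i * q₂ i)
        + s ^ 3 * (q₁ i - q₂ i) ^ 2 * ((2 + αs + αs ^ 2) * q₁ i + (αs + αs ^ 2) * q₂ i)
        + (αs * s ^ 2 * (q₁ i - q₂ i) ^ 2) ^ 2 := by
    intro i
    have j1 : Integrable (fun ω => (X i ω : ℝ) ^ 0 * ((Y i ω : ℝ) ^ 2 * (Z i ω : ℝ) ^ 0)) μ := (key i 0 2 0 (by norm_num) (by norm_num) (by norm_num)).1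
    have j2 : Integrable (fun ω => (X i ω : ℝ) ^ 2 * ((Y i ω : ℝ) ^ 2 * (Z i ω : ℝ) ^ 0)) μ := (key i 2 2 0 (by norm_num) (by norm_num) (by norm_num)).1
    have j3 : Integrable (fun ω => (X i ω : ℝ) ^ 0 * ((Y i ω : ℝ) ^ 2 * (Z i ω : ℝ) ^ 2)) μ := (key i 0 2 2 (by norm_num) (by norm_num) (by norm_num)).1
    have j4 : Integrable (fun ω => (X i ω : ℝ) ^ 0 * ((Y i ω : ℝ) ^ 4 * (Z i ω : ℝ) ^ 0)) μ := (key i 0 4 0 (by norm_num) (by norm_num) (by norm_num)).1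
    have j5 : Integrable (fun ω => (X i ω : ℝ) ^ 2 * ((Y i ω : ℝ) ^ 0 * (Z i ω : ℝ) ^ 2)) μ := (key i 2 0 2 (by norm_num) (by norm_num) (by norm_num)).1
    have j6 : Integrable (fun ω => 2 * ((X i ω : ℝ) ^ 1 * ((Y i ω : ℝ) ^ 2 * (Z i ω : ℝ) ^ 0))) μ := ((key i 1 2 0 (by norm_num) (by norm_num) (by norm_num)).1).const_mul 2
    have j7 : Integrable (fun ω => 2 * ((X i ω : ℝ) ^ 0 * ((Y i ω : ℝ) ^ 2 * (Z i ω : ℝ) ^ 1))) μ := ((key i 0 2 1 (by norm_num) (by norm_num) (by norm_num)).1).const_mul 2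
    have j8 : Integrable (fun ω => 2 * ((X i ω : ℝ) ^ 0 * ((Y i ω : ℝ) ^ 3 * (Z i ω : ℝ) ^ 0))) μ := ((key i 0 3 0 (by norm_num) (by norm_num) (by norm_num)).1).const_mul 2
    have j9 : Integrable (fun ω => 2 * ((X i ω : ℝ) ^ 1 * ((Y i ω : ℝ) ^ 1 * (Z i ω : ℝ) ^ 1))) μ := ((key i 1 1 1 (by norm_num) (by norm_num) (by norm_num)).1).const_mul 2
    have j10 : Integrable (fun ω => 4 * ((X i ω : ℝ) ^ 1 * ((Y i ω : ℝ) ^ 2 * (Z i ω : ℝ) ^ 1))) μ := ((key i 1 2 1 (by norm_num) (by norm_num) (by norm_num)).1).const_mul 4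
    have j11 : Integrable (fun ω => 2 * ((X i ω : ℝ) ^ 1 * ((Y i ω : ℝ) ^ 3 * (Z i ω : ℝ) ^ 0))) μ := ((key i 1 3 0 (by norm_num) (by norm_num) (by norm_num)).1).const_mul 2
    have j12 : Integrable (fun ω => 2 * ((X i ω : ℝ) ^ 2 * ((Y i ω : ℝ) ^ 1 * (Z i ω : ℝ) ^ 1))) μ := ((key i 2 1 1 (by norm_num) (by norm_num) (by norm_num)).1).const_mul 2
    have j13 : Integrable (fun ω => 2 * ((X i ω : ℝ) ^ 0 * ((Y i ω : ℝ) ^ 3 * (Z i ω : ℝ) ^ 1))) μ := ((key i 0 3 1 (by norm_num) (by norm_num) (by norm_num)).1).const_mul 2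
    have j14 : Integrable (fun ω => 2 * ((X i ω : ℝ) ^ 1 * ((Y i ω : ℝ) ^ 1 * (Z i ω : ℝ) ^ 2))) μ := ((key i 1 1 2 (by norm_num) (by norm_num) (by norm_num)).1).const_mul 2
    have s1 : Integrable (fun ω => (X i ω : ℝ) ^ 0 * ((Y i ω : ℝ) ^ 2 * (Z i ω : ℝ) ^ 0)) μ := j1
    have s2 : Integrable (fun ω => (X i ω : ℝ) ^ 0 * ((Y i ω : ℝ) ^ 2 * (Z i ω : ℝ) ^ 0) + (X i ω : ℝ) ^ 2 * ((Y i ω : ℝ) ^ 2 * (Z i ω : ℝ) ^ 0)) μ := s1.add j2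
    have s3 : Integrable (fun ω => (X i ω : ℝ) ^ 0 * ((Y i ω : ℝ) ^ 2 * (Z i ω : ℝ) ^ 0) + (X i ω : ℝ) ^ 2 * ((Y i ω : ℝ) ^ 2 * (Z i ω : ℝ) ^ 0) + (X i ω : ℝ) ^ 0 * ((Y i ω : ℝ) ^ 2 * (Z i ω : ℝ) ^ 2)) μ := s2.add j3
    have s4 : Integrable (fun ω => (X i ω : ℝ) ^ 0 * ((Y i ω : ℝ) ^ 2 * (Z i ω : ℝ) ^ 0) + (X i ω : ℝ) ^ 2 * ((Y i ω : ℝ) ^ 2 * (Z i ω : ℝ) ^ 0) + (X i ω : ℝ) ^ 0 * ((Y i ω : ℝ) ^ 2 * (Z i ω : ℝ) ^ 2) + (X i ω : ℝ) ^ 0 * ((Y i ω : ℝ) ^ 4 * (Z i ω : ℝ) ^ 0)) μ := s3.add j4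
    have s5 : Integrable (fun ω => (X i ω : ℝ) ^ 0 * ((Y i ω : ℝ) ^ 2 * (Z i ω : ℝ) ^ 0) + (X i ω : ℝ) ^ 2 * ((Y i ω : ℝ) ^ 2 * (Z i ω : ℝ) ^ 0) + (X i ω : ℝ) ^ 0 * ((Y i ω : ℝ) ^ 2 * (Z i ω : ℝ) ^ 2) + (X i ω : ℝ) ^ 0 * ((Y i ω : ℝ) ^ 4 * (Z i ω : ℝ) ^ 0) + (X i ω : ℝ) ^ 2 * ((Y i ω : ℝ) ^ 0 * (Z i ω : ℝ) ^ 2)) μ := s4.add j5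
    have s6 : Integrable (fun ω => (X i ω : ℝ) ^ 0 * ((Y i ω : ℝ) ^ 2 * (Z i ω : ℝ) ^ 0) + (X i ω : ℝ) ^ 2 * ((Y i ω : ℝ) ^ 2 * (Z i ω : ℝ) ^ 0) + (X i ω : ℝ) ^ 0 * ((Y i ω : ℝ) ^ 2 * (Z i ω : ℝ) ^ 2) + (X i ω : ℝ) ^ 0 * ((Y i ω : ℝ) ^ 4 * (Z i ω : ℝ) ^ 0) + (X i ω : ℝ) ^ 2 * ((Y i ω : ℝ) ^ 0 * (Z i ω : ℝ) ^ 2) + 2 * ((X i ω : ℝ) ^ 1 * ((Y i ω : ℝ) ^ 2 * (Z i ω : ℝ) ^ 0))) μ := s5.add j6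
    have s7 : Integrable (fun ω => (X i ω : ℝ) ^ 0 * ((Y i ω : ℝ) ^ 2 * (Z i ω : ℝ) ^ 0) + (X i ω : ℝ) ^ 2 * ((Y i ω : ℝ) ^ 2 * (Z i ω : ℝ) ^ 0) + (X i ω : ℝ) ^ 0 * ((Y i ω : ℝ) ^ 2 * (Z i ω : ℝ) ^ 2) + (X i ω : ℝ) ^ 0 * ((Y i ω : ℝ) ^ 4 * (Z i ω : ℝ) ^ 0) + (X i ω : ℝ) ^ 2 * ((Y i ω : ℝ) ^ 0 * (Z i ω : ℝ) ^ 2) + 2 * ((X i ω : ℝ) ^ 1 * ((Y i ω : ℝ) ^ 2 * (Z i ω : ℝ) ^ 0)) + 2 * ((X i ω : ℝ) ^ 0 * ((Y i ω : ℝ) ^ 2 * (Z i ω : ℝ) ^ 1))) μ := s6.add j7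
    have s8 : Integrable (fun ω => (X i ω : ℝ) ^ 0 * ((Y i ω : ℝ) ^ 2 * (Z i ω : ℝ) ^ 0) + (X i ω : ℝ) ^ 2 * ((Y i ω : ℝ) ^ 2 * (Z i ω : ℝ) ^ 0) + (X i ω : ℝ) ^ 0 * ((Y i ω : ℝ) ^ 2 * (Z i ω : ℝ) ^ 2) + (X i ω : ℝ) ^ 0 * ((Y i ω : ℝ) ^ 4 * (Z i ω : ℝ) ^ 0) + (X i ω : ℝ) ^ 2 * ((Y i ω : ℝ) ^ 0 * (Z i ω : ℝ) ^ 2) + 2 * ((X i ω : ℝ) ^ 1 * ((Y i ω : ℝ) ^ 2 * (Z i ω : ℝ) ^ 0)) + 2 * ((X i ω : ℝ) ^ 0 * ((Y i ω : ℝ) ^ 2 * (Z i ω : ℝ) ^ 1)) - 2 * ((X i ω : ℝ) ^ 0 * ((Y i ω : ℝ) ^ 3 * (Z i ω : ℝ) ^ 0))) μ := s7.sub j8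
    have s9 : Integrable (fun ω => (X i ω : ℝ) ^ 0 * ((Y i ω : ℝ) ^ 2 * (Z i ω : ℝ) ^ 0) + (X i ω : ℝ) ^ 2 * ((Y i ω : ℝ) ^ 2 * (Z i ω : ℝ) ^ 0) + (X i ω : ℝ) ^ 0 * ((Y i ω : ℝ) ^ 2 * (Z i ω : ℝ) ^ 2) + (X i ω : ℝ) ^ 0 * ((Y i ω : ℝ) ^ 4 * (Z i ω : ℝ) ^ 0) + (X i ω : ℝ) ^ 2 * ((Y i ω : ℝ) ^ 0 * (Z i ω : ℝ) ^ 2) + 2 * ((X i ω : ℝ) ^ 1 * ((Y i ω : ℝ) ^ 2 * (Z i ω : ℝ) ^ 0)) + 2 * ((X i ω : ℝ) ^ 0 * ((Y i ω : ℝ) ^ 2 * (Z i ω : ℝ) ^ 1)) - 2 * ((X i ω : ℝ) ^ 0 * ((Y i ω : ℝ) ^ 3 * (Z i ω : ℝ) ^ 0)) - 2 * ((X i ω : ℝ) ^ 1 * ((Y i ω : ℝ) ^ 1 * (Z i ω : ℝ) ^ 1))) μ := s8.sub j9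
    have s10 : Integrable (fun ω => (X i ω : ℝ) ^ 0 * ((Y i ω : ℝ) ^ 2 * (Z i ω : ℝ) ^ 0) + (X i ω : ℝ) ^ 2 * ((Y i ω : ℝ) ^ 2 * (Z i ω : ℝ) ^ 0) + (X i ω : ℝ) ^ 0 * ((Y i ω : ℝ) ^ 2 * (Z i ω : ℝ) ^ 2) + (X i ω : ℝ) ^ 0 * ((Y i ω : ℝ) ^ 4 * (Z i ω : ℝ) ^ 0) + (X i ω : ℝ) ^ 2 * ((Y i ω : ℝ) ^ 0 * (Z i ω : ℝ) ^ 2) + 2 * ((X i ω : ℝ) ^ 1 * ((Y i ω : ℝ) ^ 2 * (Z i ω : ℝ) ^ 0)) + 2 * ((X i ω : ℝ) ^ 0 * ((Y i ω : ℝ) ^ 2 * (Z i ω : ℝ) ^ 1)) - 2 * ((X i ω : ℝ) ^ 0 * ((Y i ω : ℝ) ^ 3 * (Z i ω : ℝ) ^ 0)) - 2 * ((X i ω : ℝ) ^ 1 * ((Y i ω : ℝ) ^ 1 * (Z i ω : ℝ) ^ 1)) + 4 * ((X i ω : ℝ) ^ 1 * ((Y i ω : ℝ) ^ 2 * (Z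 i ω : ℝ) ^ 1))) μ := s9.add j10
    have s11 : Integrable (fun ω => (X i ω : ℝ) ^ 0 * ((Y i ω : ℝ) ^ 2 * (Z i ω : ℝ) ^ 0) + (X i ω : ℝ) ^ 2 * ((Y i ω : ℝ) ^ 2 * (Z i ω : ℝ) ^ 0) + (X i ω : ℝ) ^ 0 * ((Y i ω : ℝ) ^ 2 * (Z i ω : ℝ) ^ 2) + (X i ω : ℝ) ^ 0 * ((Y i ω : ℝ) ^ 4 * (Z i ω : ℝ) ^ 0) + (X i ω : ℝ) ^ 2 * ((Y i ω : ℝ) ^ 0 * (Z i ω : ℝ) ^ 2) + 2 * ((X i ω : ℝ) ^ 1 * ((Y i ω : ℝ) ^ 2 * (Z i ω : ℝ) ^ 0)) + 2 * ((X i ω : ℝ) ^ 0 * ((Y i ω : ℝ) ^ 2 * (Z i ω : ℝ) ^ 1)) - 2 * ((X i ω : ℝ) ^ 0 * ((Y i ω : ℝ) ^ 3 * (Z i ω : ℝ) ^ 0)) - 2 * ((X i ω : ℝ) ^ 1 * ((Y i ω : ℝ) ^ 1 * (Z i ω : ℝ) ^ 1)) + 4 * ((X i ω : ℝ) ^ 1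 * ((Y i ω : ℝ) ^ 2 * (Z i ω : ℝ) ^ 1)) - 2 * ((X i ω : ℝ) ^ 1 * ((Y i ω : ℝ) ^ 3 * (Z i ω : ℝ) ^ 0))) μ := s10.sub j11
    have s12 : Integrable (fun ω => (X i ω : ℝ) ^ 0 * ((Y i ω : ℝ) ^ 2 * (Z i ω : ℝ) ^ 0) + (X i ω : ℝ) ^ 2 * ((Y i ω : ℝ) ^ 2 * (Z i ω : ℝ) ^ 0) + (X i ω : ℝ) ^ 0 * ((Y i ω : ℝ) ^ 2 * (Z i ω : ℝ) ^ 2) + (X i ω : ℝ) ^ 0 * ((Y i ω : ℝ) ^ 4 * (Z i ω : ℝ) ^ 0) + (X i ω : ℝ) ^ 2 * ((Y i ω : ℝ) ^ 0 * (Z i ω : ℝ) ^ 2) + 2 * ((X i ω : ℝ) ^ 1 * ((Y i ω : ℝ) ^ 2 * (Z i ω : ℝ) ^ 0)) + 2 * ((X i ω : ℝ) ^ 0 * ((Y i ω : ℝ) ^ 2 * (Z i ω : ℝ) ^ 1)) - 2 * ((X i ω : ℝ) ^ 0 * ((Y i ω : ℝ) ^ 3 * (Z i ω : ℝ) ^ 0))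 - 2 * ((X i ω : ℝ) ^ 1 * ((Y i ω : ℝ) ^ 1 * (Z i ω : ℝ) ^ 1)) + 4 * ((X i ω : ℝ) ^ 1 * ((Y i ω : ℝ) ^ 2 * (Z i ω : ℝ) ^ 1)) - 2 * ((X i ω : ℝ) ^ 1 * ((Y i ω : ℝ) ^ 3 * (Z i ω : ℝ) ^ 0)) - 2 * ((X i ω : ℝ) ^ 2 * ((Y i ω : ℝ) ^ 1 * (Z i ω : ℝ) ^ 1))) μ := s11.sub j12
    have s13 : Integrable (fun ω => (X i ω : ℝ) ^ 0 * ((Y i ω : ℝ) ^ 2 * (Z i ω : ℝ) ^ 0) + (X i ω : ℝ) ^ 2 * ((Y i ω : ℝ) ^ 2 * (Z i ω : ℝ) ^ 0) + (X i ω : ℝ) ^ 0 * ((Y i ω : ℝ) ^ 2 * (Z i ω : ℝ) ^ 2) + (X i ω : ℝ) ^ 0 * ((Y i ω : ℝ) ^ 4 * (Z i ω : ℝ) ^ 0) + (X i ω : ℝ) ^ 2 * ((Y i ω : ℝ) ^ 0 * (Z i ω : ℝ) ^ 2) + 2 * ((X i ω : ℝ) ^ 1 * ((Y i ω : ℝ)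 ^ 2 * (Z i ω : ℝ) ^ 0)) + 2 * ((X i ω : ℝ) ^ 0 * ((Y i ω : ℝ) ^ 2 * (Z i ω : ℝ) ^ 1)) - 2 * ((X i ω : ℝ) ^ 0 * ((Y i ω : ℝ) ^ 3 * (Z i ω : ℝ) ^ 0)) - 2 * ((X i ω : ℝ) ^ 1 * ((Y i ω : ℝ) ^ 1 * (Z i ω : ℝ) ^ 1)) + 4 * ((X i ω : ℝ) ^ 1 * ((Y i ω : ℝ) ^ 2 * (Z i ω : ℝ) ^ 1)) - 2 * ((X i ω : ℝ) ^ 1 * ((Y i ω : ℝ) ^ 3 * (Z i ω : ℝ) ^ 0)) - 2 * ((X i ω : ℝ) ^ 2 * ((Y i ω : ℝ) ^ 1 * (Z i ω : ℝ) ^ 1)) - 2 * ((X i ω : ℝ) ^ 0 * ((Y i ω : ℝ) ^ 3 * (Z i ω : ℝ) ^ 1))) μ := s12.sub j13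
    have sfull : Integrable (fun ω => (X i ω : ℝ) ^ 0 * ((Y i ω : ℝ) ^ 2 * (Z i ω : ℝ) ^ 0) + (X i ω : ℝ) ^ 2 * ((Y i ω : ℝ) ^ 2 * (Z i ω : ℝ) ^ 0) + (X i ω : ℝ) ^ 0 * ((Y i ω : ℝ) ^ 2 * (Z i ω : ℝ) ^ 2) + (X i ω : ℝ) ^ 0 * ((Y i ω : ℝ) ^ 4 * (Z i ω : ℝ) ^ 0) + (X i ω : ℝ) ^ 2 * ((Y i ω : ℝ) ^ 0 * (Z i ω : ℝ) ^ 2) + 2 * ((X i ω : ℝ) ^ 1 * ((Y i ω : ℝ) ^ 2 * (Z i ω : ℝ) ^ 0)) + 2 * ((X i ω : ℝ) ^ 0 * ((Y i ω : ℝ) ^ 2 * (Z i ω : ℝ) ^ 1)) - 2 * ((X i ω : ℝ) ^ 0 * ((Y i ω : ℝ) ^ 3 * (Z i ω : ℝ) ^ 0)) - 2 * ((X i ω : ℝ) ^ 1 * ((Y i ω : ℝ) ^ 1 * (Z i ω : ℝ) ^ 1)) + 4 * ((X i ω : ℝ) ^ 1 * ((Y i ω : ℝ) ^ 2 * (Z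 i ω : ℝ) ^ 1)) - 2 * ((X i ω : ℝ) ^ 1 * ((Y i ω : ℝ) ^ 3 * (Z i ω : ℝ) ^ 0)) - 2 * ((X i ω : ℝ) ^ 2 * ((Y i ω : ℝ) ^ 1 * (Z i ω : ℝ) ^ 1)) - 2 * ((X i ω : ℝ) ^ 0 * ((Y i ω : ℝ) ^ 3 * (Z i ω : ℝ) ^ 1)) - 2 * ((X i ω : ℝ) ^ 1 * ((Y i ω : ℝ) ^ 1 * (Z i ω : ℝ) ^ 2))) μ := s13.sub j14
    have hexp : (fun ω => (T i ω) ^ 2) = fun ω => (X i ω : ℝ) ^ 0 * ((Y i ω : ℝ) ^ 2 * (Z i ω : ℝ) ^ 0) + (X i ω : ℝ) ^ 2 * ((Y i ω : ℝ) ^ 2 * (Z i ω : ℝ) ^ 0) + (X i ω : ℝ) ^ 0 * ((Y i ω : ℝ) ^ 2 * (Z i ω : ℝ) ^ 2) + (X i ω : ℝ) ^ 0 * ((Y i ω : ℝ) ^ 4 * (Z i ω : ℝ) ^ 0) + (X i ω : ℝ) ^ 2 * ((Y i ω : ℝ) ^ 0 * (Z i ω : ℝ) ^ 2) + 2 * ((X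 i ω : ℝ) ^ 1 * ((Y i ω : ℝ) ^ 2 * (Z i ω : ℝ) ^ 0)) + 2 * ((X i ω : ℝ) ^ 0 * ((Y i ω : ℝ) ^ 2 * (Z i ω : ℝ) ^ 1)) - 2 * ((X i ω : ℝ) ^ 0 * ((Y i ω : ℝ) ^ 3 * (Z i ω : ℝ) ^ 0)) - 2 * ((X i ω : ℝ) ^ 1 * ((Y i ω : ℝ) ^ 1 * (Z i ω : ℝ) ^ 1)) + 4 * ((X i ω : ℝ) ^ 1 * ((Y i ω : ℝ) ^ 2 * (Z i ω : ℝ) ^ 1)) - 2 * ((X i ω : ℝ) ^ 1 * ((Y i ω : ℝ) ^ 3 * (Z i ω : ℝ) ^ 0)) - 2 * ((X i ω : ℝ) ^ 2 * ((Y i ω : ℝ) ^ 1 * (Z i ω : ℝ) ^ 1)) - 2 * ((X i ω : ℝ) ^ 0 * ((Y i ω : ℝ) ^ 3 * (Z i ω : ℝ) ^ 1)) - 2 * ((X i ω : ℝ) ^ 1 * ((Y i ω : ℝ) ^ 1 * (Z i ω : ℝ) ^ 2)) := by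
      funext ω; simp only [hTdef]; ring
    rw [hexp]
    rw [integral_sub s13 j14,
      integral_sub s12 j13,
      integral_sub s11 j12,
      integral_sub s10 j11,
      integral_add s9 j10,
      integral_sub s8 j9,
      integral_sub s7 j8,
      integral_add s6 j7,
      integral_add s5 j6,
      integral_add s4 j5,
      integral_add s3 j4,
      integral_add s2 j3,
      integral_add s1 j2]
    try simp only [MeasureTheory.integral_const_mul]
    rw [(key i 0 2 0 (by norm_num) (by norm_num) (by norm_num)).2,
      (key i 2 2 0 (by norm_num) (by norm_num) (by norm_num)).2,
      (key i 0 2 2 (by norm_num) (by norm_num) (by norm_num)).2,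
      (key i 0 4 0 (by norm_num) (by norm_num) (by norm_num)).2,
      (key i 2 0 2 (by norm_num) (by norm_num) (by norm_num)).2,
      (key i 1 2 0 (by norm_num) (by norm_num) (by norm_num)).2,
      (key i 0 2 1 (by norm_num) (by norm_num) (by norm_num)).2,
      (key i 0 3 0 (by norm_num) (by norm_num) (by norm_num)).2,
      (key i 1 1 1 (by norm_num) (by norm_num) (by norm_num)).2,
      (key i 1 2 1 (by norm_num) (by norm_num) (by norm_num)).2,
      (key i 1 3 0 (by norm_num) (by norm_num) (by norm_num)).2,
      (key i 2 1 1 (by norm_num) (by norm_num) (by norm_num)).2,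
      (key i 0 3 1 (by norm_num) (by norm_num) (by norm_num)).2,
      (key i 1 1 2 (by norm_num) (by norm_num) (by norm_num)).2]
    simp only [Stmt10Aux.pm]
    rw [hp i]
    ring
  have hTmeas : ∀ i : Fin n, Measurable (T i) := by
    intro i
    have hXr : Measurable (fun ω => (X i ω : ℝ)) := measurable_from_top.comp (hXm i)
    have hYr : Measurable (fun ω => (Y i ω : ℝ)) := measurable_from_top.comp (hYm i)
    have hZr : Measurable (fun ω => (Z i ω : ℝ)) := measurable_from_top.comp (hZm i)
    exact (((hYr.add (hXr.mul hYr)).add (hYr.mul hZr)).sub (hYr.pow_const 2)).sub (hXr.mul hZr)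
  have hT2int : ∀ i : Fin n, Integrable (fun ω => (T i ω) ^ 2) μ := by
    intro i
    have j1 : Integrable (fun ω => (X i ω : ℝ) ^ 0 * ((Y i ω : ℝ) ^ 2 * (Z i ω : ℝ) ^ 0)) μ := (key i 0 2 0 (by norm_num) (by norm_num) (by norm_num)).1
    have j2 : Integrable (fun ω => (X i ω : ℝ) ^ 2 * ((Y i ω : ℝ) ^ 2 * (Z i ω : ℝ) ^ 0)) μ := (key i 2 2 0 (by norm_num) (by norm_num) (by norm_num)).1
    have j3 : Integrable (fun ω => (X i ω : ℝ) ^ 0 * ((Y i ω : ℝ) ^ 2 * (Z i ω : ℝ) ^ 2)) μ := (key i 0 2 2 (by norm_num) (by norm_num) (by norm_num)).1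
    have j4 : Integrable (fun ω => (X i ω : ℝ) ^ 0 * ((Y i ω : ℝ) ^ 4 * (Z i ω : ℝ) ^ 0)) μ := (key i 0 4 0 (by norm_num) (by norm_num) (by norm_num)).1
    have j5 : Integrable (fun ω => (X i ω : ℝ) ^ 2 * ((Y i ω : ℝ) ^ 0 * (Z i ω : ℝ) ^ 2)) μ := (key i 2 0 2 (by norm_num) (by norm_num) (by norm_num)).1
    have j6 : Integrable (fun ω => 2 * ((X i ω : ℝ) ^ 1 * ((Y i ω : ℝ) ^ 2 * (Z i ω : ℝ) ^ 0))) μ := ((key i 1 2 0 (by norm_num) (by norm_num) (by norm_num)).1).const_mul 2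
    have j7 : Integrable (fun ω => 2 * ((X i ω : ℝ) ^ 0 * ((Y i ω : ℝ) ^ 2 * (Z i ω : ℝ) ^ 1))) μ := ((key i 0 2 1 (by norm_num) (by norm_num) (by norm_num)).1).const_mul 2
    have j8 : Integrable (fun ω => 2 * ((X i ω : ℝ) ^ 0 * ((Y i ω : ℝ) ^ 3 * (Z i ω : ℝ) ^ 0))) μ := ((key i 0 3 0 (by norm_num) (by norm_num) (by norm_num)).1).const_mul 2
    have j9 : Integrable (fun ω => 2 * ((X i ω : ℝ) ^ 1 * ((Y i ω : ℝ) ^ 1 * (Z i ω : ℝ) ^ 1))) μ := ((key i 1 1 1 (by norm_num) (by norm_num) (by norm_num)).1).const_mul 2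
    have j10 : Integrable (fun ω => 4 * ((X i ω : ℝ) ^ 1 * ((Y i ω : ℝ) ^ 2 * (Z i ω : ℝ) ^ 1))) μ := ((key i 1 2 1 (by norm_num) (by norm_num) (by norm_num)).1).const_mul 4
    have j11 : Integrable (fun ω => 2 * ((X i ω : ℝ) ^ 1 * ((Y i ω : ℝ) ^ 3 * (Z i ω : ℝ) ^ 0))) μ := ((key i 1 3 0 (by norm_num) (by norm_num) (by norm_num)).1).const_mul 2
    have j12 : Integrable (fun ω => 2 * ((X i ω : ℝ) ^ 2 * ((Y i ω : ℝ) ^ 1 * (Z i ω : ℝ) ^ 1))) μ := ((key i 2 1 1 (by norm_num) (by norm_num) (by norm_num)).1).const_mul 2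
    have j13 : Integrable (fun ω => 2 * ((X i ω : ℝ) ^ 0 * ((Y i ω : ℝ) ^ 3 * (Z i ω : ℝ) ^ 1))) μ := ((key i 0 3 1 (by norm_num) (by norm_num) (by norm_num)).1).const_mul 2
    have j14 : Integrable (fun ω => 2 * ((X i ω : ℝ) ^ 1 * ((Y i ω : ℝ) ^ 1 * (Z i ω : ℝ) ^ 2))) μ := ((key i 1 1 2 (by norm_num) (by norm_num) (by norm_num)).1).const_mul 2
    have sb1 : Integrable (fun ω => (X i ω : ℝ) ^ 0 * ((Y i ω : ℝ) ^ 2 * (Z i ω : ℝ) ^ 0)) μ := j1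
    have sb2 : Integrable (fun ω => (X i ω : ℝ) ^ 0 * ((Y i ω : ℝ) ^ 2 * (Z i ω : ℝ) ^ 0) + (X i ω : ℝ) ^ 2 * ((Y i ω : ℝ) ^ 2 * (Z i ω : ℝ) ^ 0)) μ := sb1.add j2
    have sb3 : Integrable (fun ω => (X i ω : ℝ) ^ 0 * ((Y i ω : ℝ) ^ 2 * (Z i ω : ℝ) ^ 0) + (X i ω : ℝ) ^ 2 * ((Y i ω : ℝ) ^ 2 * (Z i ω : ℝ) ^ 0) + (X i ω : ℝ) ^ 0 * ((Y i ω : ℝ) ^ 2 * (Z i ω : ℝ) ^ 2)) μ := sb2.add j3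
    have sb4 : Integrable (fun ω => (X i ω : ℝ) ^ 0 * ((Y i ω : ℝ) ^ 2 * (Z i ω : ℝ) ^ 0) + (X i ω : ℝ) ^ 2 * ((Y i ω : ℝ) ^ 2 * (Z i ω : ℝ) ^ 0) + (X i ω : ℝ) ^ 0 * ((Y i ω : ℝ) ^ 2 * (Z i ω : ℝ) ^ 2) + (X i ω : ℝ) ^ 0 * ((Y i ω : ℝ) ^ 4 * (Z i ω : ℝ) ^ 0)) μ := sb3.add j4
    have sb5 : Integrable (fun ω => (X i ω : ℝ) ^ 0 * ((Y i ω : ℝ) ^ 2 * (Z i ω : ℝ) ^ 0) + (X i ω : ℝ) ^ 2 * ((Y i ω : ℝ) ^ 2 * (Z i ω : ℝ) ^ 0) + (X i ω : ℝ) ^ 0 * ((Y i ω : ℝ) ^ 2 * (Z i ω : ℝ) ^ 2) + (X i ω : ℝ) ^ 0 * ((Y i ω : ℝ) ^ 4 * (Z i ω : ℝ) ^ 0) + (X i ω : ℝ) ^ 2 * ((Y i ω : ℝ) ^ 0 * (Z i ω : ℝ) ^ 2)) μ := sb4.add j5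
    have sb6 : Integrable (fun ω => (X i ω : ℝ) ^ 0 * ((Y i ω : ℝ) ^ 2 * (Z i ω : ℝ) ^ 0) + (X i ω : ℝ) ^ 2 * ((Y i ω : ℝ) ^ 2 * (Z i ω : ℝ) ^ 0) + (X i ω : ℝ) ^ 0 * ((Y i ω : ℝ) ^ 2 * (Z i ω : ℝ) ^ 2) + (X i ω : ℝ) ^ 0 * ((Y i ω : ℝ) ^ 4 * (Z i ω : ℝ) ^ 0) + (X i ω : ℝ) ^ 2 * ((Y i ω : ℝ) ^ 0 * (Z i ω : ℝ) ^ 2) + 2 * ((X i ω : ℝ) ^ 1 * ((Y i ω : ℝ) ^ 2 * (Z i ω : ℝ) ^ 0))) μ := sb5.add j6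
    have sb7 : Integrable (fun ω => (X i ω : ℝ) ^ 0 * ((Y i ω : ℝ) ^ 2 * (Z i ω : ℝ) ^ 0) + (X i ω : ℝ) ^ 2 * ((Y i ω : ℝ) ^ 2 * (Z i ω : ℝ) ^ 0) + (X i ω : ℝ) ^ 0 * ((Y i ω : ℝ) ^ 2 * (Z i ω : ℝ) ^ 2) + (X i ω : ℝ) ^ 0 * ((Y i ω : ℝ) ^ 4 * (Z i ω : ℝ) ^ 0) + (X i ω : ℝ) ^ 2 * ((Y i ω : ℝ) ^ 0 * (Z i ω : ℝ) ^ 2) + 2 * ((X i ω : ℝ) ^ 1 * ((Y i ω : ℝ) ^ 2 * (Z i ω : ℝ) ^ 0)) + 2 * ((X i ω : ℝ) ^ 0 * ((Y i ω : ℝ) ^ 2 * (Z i ω : ℝ) ^ 1))) μ := sb6.add j7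
    have sb8 : Integrable (fun ω => (X i ω : ℝ) ^ 0 * ((Y i ω : ℝ) ^ 2 * (Z i ω : ℝ) ^ 0) + (X i ω : ℝ) ^ 2 * ((Y i ω : ℝ) ^ 2 * (Z i ω : ℝ) ^ 0) + (X i ω : ℝ) ^ 0 * ((Y i ω : ℝ) ^ 2 * (Z i ω : ℝ) ^ 2) + (X i ω : ℝ) ^ 0 * ((Y i ω : ℝ) ^ 4 * (Z i ω : ℝ) ^ 0) + (X i ω : ℝ) ^ 2 * ((Y i ω : ℝ) ^ 0 * (Z i ω : ℝ) ^ 2) + 2 * ((X i ω : ℝ) ^ 1 * ((Y i ω : ℝ) ^ 2 * (Z i ω : ℝ) ^ 0)) + 2 * ((X i ω : ℝ) ^ 0 * ((Y i ω : ℝ) ^ 2 * (Z i ω : ℝ) ^ 1)) - 2 * ((X i ω : ℝ) ^ 0 * ((Y i ω : ℝ) ^ 3 * (Z i ω : ℝ) ^ 0))) μ := sb7.sub j8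
    have sb9 : Integrable (fun ω => (X i ω : ℝ) ^ 0 * ((Y i ω : ℝ) ^ 2 * (Z i ω : ℝ) ^ 0) + (X i ω : ℝ) ^ 2 * ((Y i ω : ℝ) ^ 2 * (Z i ω : ℝ) ^ 0) + (X i ω : ℝ) ^ 0 * ((Y i ω : ℝ) ^ 2 * (Z i ω : ℝ) ^ 2) + (X i ω : ℝ) ^ 0 * ((Y i ω : ℝ) ^ 4 * (Z i ω : ℝ) ^ 0) + (X i ω : ℝ) ^ 2 * ((Y i ω : ℝ) ^ 0 * (Z i ω : ℝ) ^ 2) + 2 * ((X i ω : ℝ) ^ 1 * ((Y i ω : ℝ) ^ 2 * (Z i ω : ℝ) ^ 0)) + 2 * ((X i ω : ℝ) ^ 0 * ((Y i ω : ℝ) ^ 2 * (Z i ω : ℝ) ^ 1)) - 2 * ((X i ω : ℝ) ^ 0 * ((Y i ω : ℝ) ^ 3 * (Z i ω : ℝ) ^ 0)) - 2 * ((X i ω : ℝ) ^ 1 * ((Y i ω : ℝ) ^ 1 * (Z i ω : ℝ) ^ 1))) μ := sb8.sub j9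
    have sb10 : Integrable (fun ω => (X i ω : ℝ) ^ 0 * ((Y i ω : ℝ) ^ 2 * (Z i ω : ℝ) ^ 0) + (X i ω : ℝ) ^ 2 * ((Y i ω : ℝ) ^ 2 * (Z i ω : ℝ) ^ 0) + (X i ω : ℝ) ^ 0 * ((Y i ω : ℝ) ^ 2 * (Z i ω : ℝ) ^ 2) + (X i ω : ℝ) ^ 0 * ((Y i ω : ℝ) ^ 4 * (Z i ω : ℝ) ^ 0) + (X i ω : ℝ) ^ 2 * ((Y i ω : ℝ) ^ 0 * (Z i ω : ℝ) ^ 2) + 2 * ((X i ω : ℝ) ^ 1 * ((Y i ω : ℝ) ^ 2 * (Z i ω : ℝ) ^ 0)) + 2 * ((X i ω : ℝ) ^ 0 * ((Y i ω : ℝ) ^ 2 * (Z i ω : ℝ) ^ 1)) - 2 * ((X i ω : ℝ) ^ 0 * ((Y i ω : ℝ) ^ 3 * (Z i ω : ℝ) ^ 0)) - 2 * ((X i ω : ℝ) ^ 1 * ((Y i ω : ℝ) ^ 1 * (Z i ω : ℝ) ^ 1)) + 4 * ((X i ω : ℝ) ^ 1 * ((Y i ω : ℝ) ^ 2 * (Z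 i ω : ℝ) ^ 1))) μ := sb9.add j10
    have sb11 : Integrable (fun ω => (X i ω : ℝ) ^ 0 * ((Y i ω : ℝ) ^ 2 * (Z i ω : ℝ) ^ 0) + (X i ω : ℝ) ^ 2 * ((Y i ω : ℝ) ^ 2 * (Z i ω : ℝ) ^ 0) + (X i ω : ℝ) ^ 0 * ((Y i ω : ℝ) ^ 2 * (Z i ω : ℝ) ^ 2) + (X i ω : ℝ) ^ 0 * ((Y i ω : ℝ) ^ 4 * (Z i ω : ℝ) ^ 0) + (X i ω : ℝ) ^ 2 * ((Y i ω : ℝ) ^ 0 * (Z i ω : ℝ) ^ 2) + 2 * ((X i ω : ℝ) ^ 1 * ((Y i ω : ℝ) ^ 2 * (Z i ω : ℝ) ^ 0)) + 2 * ((X i ω : ℝ) ^ 0 * ((Y i ω : ℝ) ^ 2 * (Z i ω : ℝ) ^ 1)) - 2 * ((X i ω : ℝ) ^ 0 * ((Y i ω : ℝ) ^ 3 * (Z i ω : ℝ) ^ 0)) - 2 * ((X i ω : ℝ) ^ 1 * ((Y i ω : ℝ) ^ 1 * (Z i ω : ℝ) ^ 1)) + 4 * ((X i ω : ℝ) ^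 1 * ((Y i ω : ℝ) ^ 2 * (Z i ω : ℝ) ^ 1)) - 2 * ((X i ω : ℝ) ^ 1 * ((Y i ω : ℝ) ^ 3 * (Z i ω : ℝ) ^ 0))) μ := sb10.sub j11
    have sb12 : Integrable (fun ω => (X i ω : ℝ) ^ 0 * ((Y i ω : ℝ) ^ 2 * (Z i ω : ℝ) ^ 0) + (X i ω : ℝ) ^ 2 * ((Y i ω : ℝ) ^ 2 * (Z i ω : ℝ) ^ 0) + (X i ω : ℝ) ^ 0 * ((Y i ω : ℝ) ^ 2 * (Z i ω : ℝ) ^ 2) + (X i ω : ℝ) ^ 0 * ((Y i ω : ℝ) ^ 4 * (Z i ω : ℝ) ^ 0) + (X i ω : ℝ) ^ 2 * ((Y i ω : ℝ) ^ 0 * (Z i ω : ℝ) ^ 2) + 2 * ((X i ω : ℝ) ^ 1 * ((Y i ω : ℝ) ^ 2 * (Z i ω : ℝ) ^ 0)) + 2 * ((X i ω : ℝ) ^ 0 * ((Y i ω : ℝ) ^ 2 * (Z i ω : ℝ) ^ 1)) - 2 * ((X i ω : ℝ) ^ 0 * ((Y i ω : ℝ) ^ 3 * (Z i ω : ℝ)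 ^ 0)) - 2 * ((X i ω : ℝ) ^ 1 * ((Y i ω : ℝ) ^ 1 * (Z i ω : ℝ) ^ 1)) + 4 * ((X i ω : ℝ) ^ 1 * ((Y i ω : ℝ) ^ 2 * (Z i ω : ℝ) ^ 1)) - 2 * ((X i ω : ℝ) ^ 1 * ((Y i ω : ℝ) ^ 3 * (Z i ω : ℝ) ^ 0)) - 2 * ((X i ω : ℝ) ^ 2 * ((Y i ω : ℝ) ^ 1 * (Z i ω : ℝ) ^ 1))) μ := sb11.sub j12
    have sb13 : Integrable (fun ω => (X i ω : ℝ) ^ 0 * ((Y i ω : ℝ) ^ 2 * (Z i ω : ℝ) ^ 0) + (X i ω : ℝ) ^ 2 * ((Y i ω : ℝ) ^ 2 * (Z i ω : ℝ) ^ 0) + (X i ω : ℝ) ^ 0 * ((Y i ω : ℝ) ^ 2 * (Z i ω : ℝ) ^ 2) + (X i ω : ℝ) ^ 0 * ((Y i ω : ℝ) ^ 4 * (Z i ω : ℝ) ^ 0) + (X i ω : ℝ) ^ 2 * ((Y i ω : ℝ) ^ 0 * (Z i ω : ℝ) ^ 2) + 2 * ((X i ω : ℝ) ^ 1 * ((Y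 i ω : ℝ) ^ 2 * (Z i ω : ℝ) ^ 0)) + 2 * ((X i ω : ℝ) ^ 0 * ((Y i ω : ℝ) ^ 2 * (Z i ω : ℝ) ^ 1)) - 2 * ((X i ω : ℝ) ^ 0 * ((Y i ω : ℝ) ^ 3 * (Z i ω : ℝ) ^ 0)) - 2 * ((X i ω : ℝ) ^ 1 * ((Y i ω : ℝ) ^ 1 * (Z i ω : ℝ) ^ 1)) + 4 * ((X i ω : ℝ) ^ 1 * ((Y i ω : ℝ) ^ 2 * (Z i ω : ℝ) ^ 1)) - 2 * ((X i ω : ℝ) ^ 1 * ((Y i ω : ℝ) ^ 3 * (Z i ω : ℝ) ^ 0)) - 2 * ((X i ω : ℝ) ^ 2 * ((Y i ω : ℝ) ^ 1 * (Z i ω : ℝ) ^ 1)) - 2 * ((X i ω : ℝ) ^ 0 * ((Y i ω : ℝ) ^ 3 * (Z i ω : ℝ) ^ 1))) μ := sb12.sub j13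
    have hbig : Integrable (fun ω => (X i ω : ℝ) ^ 0 * ((Y i ω : ℝ) ^ 2 * (Z i ω : ℝ) ^ 0) + (X i ω : ℝ) ^ 2 * ((Y i ω : ℝ) ^ 2 * (Z i ω : ℝ) ^ 0) + (X i ω : ℝ) ^ 0 * ((Y i ω : ℝ) ^ 2 * (Z i ω : ℝ) ^ 2) + (X i ω : ℝ) ^ 0 * ((Y i ω : ℝ) ^ 4 * (Z i ω : ℝ) ^ 0) + (X i ω : ℝ) ^ 2 * ((Y i ω : ℝ) ^ 0 * (Z i ω : ℝ) ^ 2) + 2 * ((X i ω : ℝ) ^ 1 * ((Y i ω : ℝ) ^ 2 * (Z i ω : ℝ) ^ 0)) + 2 * ((X i ω : ℝ) ^ 0 * ((Y i ω : ℝ) ^ 2 * (Z i ω : ℝ) ^ 1)) - 2 * ((X i ω : ℝ) ^ 0 * ((Y i ω : ℝ) ^ 3 * (Z i ω : ℝ) ^ 0)) - 2 * ((X i ω : ℝ) ^ 1 * ((Y i ω : ℝ) ^ 1 * (Z i ω : ℝ) ^ 1)) + 4 * ((X i ω : ℝ) ^ 1 * ((Y i ω : ℝ) ^ 2 * (Z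 i ω : ℝ) ^ 1)) - 2 * ((X i ω : ℝ) ^ 1 * ((Y i ω : ℝ) ^ 3 * (Z i ω : ℝ) ^ 0)) - 2 * ((X i ω : ℝ) ^ 2 * ((Y i ω : ℝ) ^ 1 * (Z i ω : ℝ) ^ 1)) - 2 * ((X i ω : ℝ) ^ 0 * ((Y i ω : ℝ) ^ 3 * (Z i ω : ℝ) ^ 1)) - 2 * ((X i ω : ℝ) ^ 1 * ((Y i ω : ℝ) ^ 1 * (Z i ω : ℝ) ^ 2))) μ := sb13.sub j14
    have heq : (fun ω => (T i ω) ^ 2) = fun ω => (X i ω : ℝ) ^ 0 * ((Y i ω : ℝ) ^ 2 * (Z i ω : ℝ) ^ 0) + (X i ω : ℝ) ^ 2 * ((Y i ω : ℝ) ^ 2 * (Z i ω : ℝ) ^ 0) + (X i ω : ℝ) ^ 0 * ((Y i ω : ℝ) ^ 2 * (Z i ω : ℝ) ^ 2) + (X i ω : ℝ) ^ 0 * ((Y i ω : ℝ) ^ 4 * (Z i ω : ℝ) ^ 0) + (X i ω : ℝ) ^ 2 * ((Y i ω : ℝ) ^ 0 * (Z i ω : ℝ) ^ 2) + 2 * ((X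 i ω : ℝ) ^ 1 * ((Y i ω : ℝ) ^ 2 * (Z i ω : ℝ) ^ 0)) + 2 * ((X i ω : ℝ) ^ 0 * ((Y i ω : ℝ) ^ 2 * (Z i ω : ℝ) ^ 1)) - 2 * ((X i ω : ℝ) ^ 0 * ((Y i ω : ℝ) ^ 3 * (Z i ω : ℝ) ^ 0)) - 2 * ((X i ω : ℝ) ^ 1 * ((Y i ω : ℝ) ^ 1 * (Z i ω : ℝ) ^ 1)) + 4 * ((X i ω : ℝ) ^ 1 * ((Y i ω : ℝ) ^ 2 * (Z i ω : ℝ) ^ 1)) - 2 * ((X i ω : ℝ) ^ 1 * ((Y i ω : ℝ) ^ 3 * (Z i ω : ℝ) ^ 0)) - 2 * ((X i ω : ℝ) ^ 2 * ((Y i ω : ℝ) ^ 1 * (Z i ω : ℝ) ^ 1)) - 2 * ((X i ω : ℝ) ^ 0 * ((Y i ω : ℝ) ^ 3 * (Z i ω : ℝ) ^ 1)) - 2 * ((X i ω : ℝ) ^ 1 * ((Y i ω : ℝ) ^ 1 * (Z i ω : ℝ) ^ 2)) := by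
      funext ω; simp only [hTdef]; ring
    rw [heq]
    exact hbig
  have hTmem : ∀ i : Fin n, MemLp (T i) 2 μ := fun i =>
    (memLp_two_iff_integrable_sq (hTmeas i).aestronglyMeasurable).2 (hT2int i)
  have hvar : ∀ i : Fin n, variance (T i) μ
      = s ^ 2 * (q₁ i * q₂ i + 2 * q₁ i ^ 2 + p i * q₁ i + p i * q₂ i)
        + s ^ 3 * (q₁ i - q₂ i) ^ 2 * ((2 + αs + αs ^ 2) * q₁ i + (αs + αs ^ 2) * q₂ i) := by
    intro i
    rw [variance_eq_sub (hTmem i)]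
    have h2 : (T i) ^ 2 = fun ω => (T i ω) ^ 2 := rfl
    rw [h2, hT2val i]
    have h1 : μ[T i] = ∫ ω, T i ω ∂μ := rfl
    rw [h1, hTval i]
    ring
  have hTind : ∀ i j : Fin n, i ≠ j → IndepFun (T i) (T j) μ := by
    intro i j hij
    have hdisj : Disjoint
        ({((0:Fin 3), i), ((1:Fin 3), i), ((2:Fin 3), i)} : Finset (Fin 3 × Fin n))
        ({((0:Fin 3), j), ((1:Fin 3), j), ((2:Fin 3), j)} : Finset (Fin 3 × Fin n)) := by
      rw [Finset.disjoint_left]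
      intro x hx hy
      simp only [Finset.mem_insert, Finset.mem_singleton] at hx hy
      have hxi : x.2 = i := by rcases hx with h | h | h <;> simp [h]
      have hxj : x.2 = j := by rcases hy with h | h | h <;> simp [h]
      exact hij (hxi.symm.trans hxj)
    have h0 := hindep.indepFun_finset _ _ hdisj hWmeas
    have hmem : ∀ (k : Fin n) (a : Fin 3), ((a, k) : Fin 3 × Fin n) ∈
        ({((0:Fin 3), k), ((1:Fin 3), k), ((2:Fin 3), k)} : Finset (Fin 3 × Fin n)) := by
      intro k a
      fin_cases a <;> simp
    classical
    set φ : (k : Fin n) →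
        ((x : {x // x ∈ ({((0:Fin 3), k), ((1:Fin 3), k), ((2:Fin 3), k)} :
          Finset (Fin 3 × Fin n))}) → ℕ) → ℝ :=
      fun k v => (v ⟨((1:Fin 3), k), hmem k 1⟩ : ℝ)
        + (v ⟨((0:Fin 3), k), hmem k 0⟩ : ℝ) * (v ⟨((1:Fin 3), k), hmem k 1⟩ : ℝ)
        + (v ⟨((1:Fin 3), k), hmem k 1⟩ : ℝ) * (v ⟨((2:Fin 3), k), hmem k 2⟩ : ℝ)
        - (v ⟨((1:Fin 3), k), hmem k 1⟩ : ℝ) ^ 2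
        - (v ⟨((0:Fin 3), k), hmem k 0⟩ : ℝ) * (v ⟨((2:Fin 3), k), hmem k 2⟩ : ℝ)
      with hφdef
    have hφm : ∀ k : Fin n, Measurable (φ k) := by
      intro k
      have hc : ∀ (idx : {x // x ∈ ({((0:Fin 3), k), ((1:Fin 3), k), ((2:Fin 3), k)} :
          Finset (Fin 3 × Fin n))}),
          Measurable (fun v : ((x : {x // x ∈ ({((0:Fin 3), k), ((1:Fin 3), k), ((2:Fin 3), k)} :
            Finset (Fin 3 × Fin n))}) → ℕ) => ((v idx : ℕ) : ℝ)) :=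
        fun idx => (measurable_from_top (f := fun m : ℕ => (m : ℝ))).comp (measurable_pi_apply idx)
      exact (((((hc _).add ((hc _).mul (hc _))).add ((hc _).mul (hc _))).sub
        ((hc _).pow_const 2)).sub ((hc _).mul (hc _)))
    have h1 := h0.comp (hφm i) (hφm j)
    have hcomp : ∀ k : Fin n, (φ k ∘ fun a (x : {x // x ∈ ({((0:Fin 3), k), ((1:Fin 3), k),
        ((2:Fin 3), k)} : Finset (Fin 3 × Fin n))}) => W x a) = T k := by
      intro k
      funext a
      simp only [Function.comp_apply, hφdef, hTdef]
      rw [(hW k).1, (hW k).2.1, (hW k).2.2]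
    rw [hcomp i, hcomp j] at h1
    exact h1
  have hvarsum : variance (fun ω => ∑ i, T i ω) μ = ∑ i, variance (T i) μ := by
    have h := IndepFun.variance_sum (μ := μ) (X := T) (s := Finset.univ)
      (fun i _ => hTmem i) (fun i _ j _ hij => hTind i j hij)
    have h2 : (∑ i, T i) = fun ω => ∑ i, T i ω := by
      funext ω; simp [Finset.sum_apply]
    rw [← h2]
    exact h
  have hBeq : B = fun ω => 2 * ∑ i, T i ω := by
    funext ω
    rw [hB ω]
  constructor
  · have hEB : μ[B] = ∫ ω, 2 * ∑ i, T i ω ∂μ := by rw [hBeq]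
    rw [hEB, MeasureTheory.integral_const_mul,
      integral_finset_sum Finset.univ (fun i _ => hTint i),
      Finset.sum_congr rfl (fun i _ => hTval i)]
    simp only [Finset.sum_neg_distrib, ← Finset.mul_sum]
    ring
  · intro b hb
    have hb1 : ∑ i, q₁ i ^ 2 ≤ b := le_trans (le_max_left _ _) hb
    have hb2 : ∑ i, q₂ i ^ 2 ≤ b := le_trans (le_max_right _ _) hb
    have hb0 : 0 ≤ b := le_trans (Finset.sum_nonneg fun i _ => sq_nonneg _) hb1
    have hQ0 : 0 ≤ ∑ i, (q₁ i - q₂ i) ^ 4 :=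
      Finset.sum_nonneg fun i _ => by positivity
    have hVB : variance B μ = 4 * ∑ i, variance (T i) μ := by
      rw [hBeq, variance_const_mul 2 (fun ω => ∑ i, T i ω) μ, hvarsum]
      norm_num
    have hcs : ∀ g : Fin n → ℝ, (∀ i, 0 ≤ g i) → (∑ i, g i ^ 2 ≤ b) →
        ∑ i, (q₁ i - q₂ i) ^ 2 * g i
          ≤ Real.sqrt (∑ i, (q₁ i - q₂ i) ^ 4) * Real.sqrt b := by
      intro g hg hgb
      have h1 : (∑ i, (q₁ i - q₂ i) ^ 2 * g i) ^ 2
          ≤ (∑ i, ((q₁ i - q₂ i) ^ 2) ^ 2) * ∑ i, g i ^ 2 :=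
        Finset.sum_mul_sq_le_sq_mul_sq _ _ _
      have h2 : ∑ i, ((q₁ i - q₂ i) ^ 2) ^ 2 = ∑ i, (q₁ i - q₂ i) ^ 4 :=
        Finset.sum_congr rfl fun i _ => by ring
      have h3 : 0 ≤ ∑ i, (q₁ i - q₂ i) ^ 2 * g i :=
        Finset.sum_nonneg fun i _ => mul_nonneg (sq_nonneg _) (hg i)
      have h4 : (∑ i, (q₁ i - q₂ i) ^ 2 * g i) ^ 2 ≤ (∑ i, (q₁ i - q₂ i) ^ 4) * b := by
        rw [h2] at h1
        refine h1.trans ?_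
        have hg0 : 0 ≤ ∑ i, g i ^ 2 := Finset.sum_nonneg fun i _ => sq_nonneg _
        exact mul_le_mul_of_nonneg_left hgb hQ0
      calc ∑ i, (q₁ i - q₂ i) ^ 2 * g i
          = Real.sqrt ((∑ i, (q₁ i - q₂ i) ^ 2 * g i) ^ 2) := (Real.sqrt_sq h3).symm
        _ ≤ Real.sqrt ((∑ i, (q₁ i - q₂ i) ^ 4) * b) := Real.sqrt_le_sqrt h4
        _ = _ := Real.sqrt_mul hQ0 b
    have hE1 := hcs q₁ hq₁0 hb1
    have hE2 := hcs q₂ hq₂0 hb2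
    have hE1p : 0 ≤ ∑ i, (q₁ i - q₂ i) ^ 2 * q₁ i :=
      Finset.sum_nonneg fun i _ => mul_nonneg (sq_nonneg _) (hq₁0 i)
    have hE2p : 0 ≤ ∑ i, (q₁ i - q₂ i) ^ 2 * q₂ i :=
      Finset.sum_nonneg fun i _ => mul_nonneg (sq_nonneg _) (hq₂0 i)
    have hS12p : 0 ≤ ∑ i, q₁ i * q₂ i :=
      Finset.sum_nonneg fun i _ => mul_nonneg (hq₁0 i) (hq₂0 i)
    have hS1p : 0 ≤ ∑ i, q₁ i ^ 2 := Finset.sum_nonneg fun i _ => sq_nonneg _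
    have hS2p : 0 ≤ ∑ i, q₂ i ^ 2 := Finset.sum_nonneg fun i _ => sq_nonneg _
    have hS12 : ∑ i, q₁ i * q₂ i ≤ b := by
      have h1 : (∑ i, q₁ i * q₂ i) ^ 2 ≤ (∑ i, q₁ i ^ 2) * ∑ i, q₂ i ^ 2 :=
        Finset.sum_mul_sq_le_sq_mul_sq _ _ _
      nlinarith [h1, hS12p, hb1, hb2, hb0, hS1p, hS2p]
    have hpq1 : ∑ i, p i * q₁ i ≤ b := by
      have heq : ∑ i, p i * q₁ i
          = (1 - αs) * (∑ i, q₁ i ^ 2) + αs * ∑ i, q₁ i * q₂ i := by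
        rw [Finset.mul_sum, Finset.mul_sum, ← Finset.sum_add_distrib]
        refine Finset.sum_congr rfl fun i _ => ?_
        rw [hp i]; ring
      rw [heq]
      nlinarith [hb1, hS12, hαs0, hαs1]
    have hpq2 : ∑ i, p i * q₂ i ≤ b := by
      have heq : ∑ i, p i * q₂ i
          = (1 - αs) * (∑ i, q₁ i * q₂ i) + αs * ∑ i, q₂ i ^ 2 := by
        rw [Finset.mul_sum, Finset.mul_sum, ← Finset.sum_add_distrib]
        refine Finset.sum_congr rfl fun i _ => ?_
        rw [hp i]; ring
      rw [heq]
      nlinarith [hb2, hS12, hαs0, hαs1]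
    have hsplit : ∑ i, variance (T i) μ
        = s ^ 2 * ((∑ i, q₁ i * q₂ i) + 2 * (∑ i, q₁ i ^ 2)
            + (∑ i, p i * q₁ i) + (∑ i, p i * q₂ i))
          + s ^ 3 * ((2 + αs + αs ^ 2) * (∑ i, (q₁ i - q₂ i) ^ 2 * q₁ i)
            + (αs + αs ^ 2) * (∑ i, (q₁ i - q₂ i) ^ 2 * q₂ i)) := by
      rw [Finset.sum_congr rfl fun i _ => hvar i]
      rw [show (fun i => s ^ 2 * (q₁ i * q₂ i + 2 * q₁ i ^ 2 + p i * q₁ i + p i * q₂ i)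
          + s ^ 3 * (q₁ i - q₂ i) ^ 2 * ((2 + αs + αs ^ 2) * q₁ i + (αs + αs ^ 2) * q₂ i))
          = fun i => s ^ 2 * (q₁ i * q₂ i) + 2 * (s ^ 2 * (q₁ i ^ 2))
            + s ^ 2 * (p i * q₁ i) + s ^ 2 * (p i * q₂ i)
            + ((2 + αs + αs ^ 2) * (s ^ 3 * ((q₁ i - q₂ i) ^ 2 * q₁ i))
              + (αs + αs ^ 2) * (s ^ 3 * ((q₁ i - q₂ i) ^ 2 * q₂ i)))
        from funext fun i => by ring]
      simp only [Finset.sum_add_distrib, ← Finset.mul_sum]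
      ring
    rw [hVB, hsplit]
    have hα2 : αs ^ 2 ≤ 1 := by nlinarith
    have hα2p : 0 ≤ αs ^ 2 := sq_nonneg _
    have hs2 : (0:ℝ) ≤ s ^ 2 := by positivity
    have hs3 : (0:ℝ) ≤ s ^ 3 := by positivity
    have hR0 : 0 ≤ Real.sqrt (∑ i, (q₁ i - q₂ i) ^ 4) * Real.sqrt b :=
      mul_nonneg (Real.sqrt_nonneg _) (Real.sqrt_nonneg _)
    have c1 : s ^ 2 * (∑ i, q₁ i * q₂ i) ≤ s ^ 2 * b := mul_le_mul_of_nonneg_left hS12 hs2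
    have c2 : s ^ 2 * (∑ i, q₁ i ^ 2) ≤ s ^ 2 * b := mul_le_mul_of_nonneg_left hb1 hs2
    have c3 : s ^ 2 * (∑ i, p i * q₁ i) ≤ s ^ 2 * b := mul_le_mul_of_nonneg_left hpq1 hs2
    have c4 : s ^ 2 * (∑ i, p i * q₂ i) ≤ s ^ 2 * b := mul_le_mul_of_nonneg_left hpq2 hs2
    have c5 : s ^ 3 * ((2 + αs + αs ^ 2) * (∑ i, (q₁ i - q₂ i) ^ 2 * q₁ i))
        ≤ s ^ 3 * (4 * (Real.sqrt (∑ i, (q₁ i - q₂ i) ^ 4) * Real.sqrt b)) := by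
      refine mul_le_mul_of_nonneg_left ?_ hs3
      have h5 : (2 + αs + αs ^ 2) * (∑ i, (q₁ i - q₂ i) ^ 2 * q₁ i)
          ≤ 4 * (∑ i, (q₁ i - q₂ i) ^ 2 * q₁ i) := by
        have := mul_nonneg (show (0:ℝ) ≤ 2 - αs - αs ^ 2 by nlinarith) hE1p
        nlinarith
      refine h5.trans ?_
      linarith [hE1]
    have c6 : s ^ 3 * ((αs + αs ^ 2) * (∑ i, (q₁ i - q₂ i) ^ 2 * q₂ i))
        ≤ s ^ 3 * (2 * (Real.sqrt (∑ i, (q₁ i - q₂ i) ^ 4) * Real.sqrt b)) := by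
      refine mul_le_mul_of_nonneg_left ?_ hs3
      have h5 : (αs + αs ^ 2) * (∑ i, (q₁ i - q₂ i) ^ 2 * q₂ i)
          ≤ 2 * (∑ i, (q₁ i - q₂ i) ^ 2 * q₂ i) := by
        have := mul_nonneg (show (0:ℝ) ≤ 2 - αs - αs ^ 2 by nlinarith) hE2p
        nlinarith
      refine h5.trans ?_
      linarith [hE2]
    have c7 : 0 ≤ s ^ 2 * b := mul_nonneg hs2 hb0
    have c8 : 0 ≤ s ^ 3 * (Real.sqrt (∑ i, (q₁ i - q₂ i) ^ 4) * Real.sqrt b) :=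
      mul_nonneg hs3 hR0
    nlinarith [c1, c2, c3, c4, c5, c6, c7, c8]
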